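/- Let S and A be measurable spaces, ν a nonzero finite measure on A, P a Markov kernel from S × A to S, and γ ∈ [0,1). For a bounded measurable reward r : S × A → ℝ let T_r denote the soft Bellman V-operator (T_r V)(s) = log ∫_A exp( r(s,a) + γ ∫_S V(s') P(ds' | (s,a)) ) ν(da). Let r₁, r₂ be bounded measurable rewards and let V₁, V₂ be bounded measurable functions on S with T_{r₁} V₁ = V₁ and T_{r₂} V₂ = V₂. Then sup_{s∈S} |V₁(s) − V₂(s)| ≤ (1/(1−γ)) · sup_{(s,a)∈S×A} |r₁(s,a) − r₂(s,a)|. -/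

import Mathlib

open MeasureTheory ProbabilityTheory

/-- Auxiliary: one-sided estimate at a fixed state. -/
lemma soft_value_one_side
    {S A : Type*} [MeasurableSpace S] [MeasurableSpace A]
    (ν : Measure A) [IsFiniteMeasure ν] (hν : ν ≠ 0)
    (P : Kernel (S × A) S) [IsMarkovKernel P]
    (γ : ℝ) (hγ0 : 0 ≤ γ)
    (r₁ r₂ : S × A → ℝ) (hr₁m : Measurable r₁) (hr₂m : Measurable r₂)
    (Cr₁ Cr₂ : ℝ) (hr₁b : ∀ p, |r₁ p| ≤ Cr₁) (hr₂b : ∀ p, |r₂ p| ≤ Cr₂)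
    (V₁ V₂ : S → ℝ) (hV₁m : Measurable V₁) (hV₂m : Measurable V₂)
    (C₁ C₂ : ℝ) (hV₁b : ∀ s, |V₁ s| ≤ C₁) (hV₂b : ∀ s, |V₂ s| ≤ C₂)
    (hfix₁ : ∀ s : S,
      Real.log (∫ a, Real.exp (r₁ (s, a) + γ * ∫ s', V₁ s' ∂(P (s, a))) ∂ν) = V₁ s)
    (hfix₂ : ∀ s : S,
      Real.log (∫ a, Real.exp (r₂ (s, a) + γ * ∫ s', V₂ s' ∂(P (s, a))) ∂ν) = V₂ s)
    (R M : ℝ) (hR : ∀ p, r₁ p - r₂ p ≤ R) (hM : ∀ s, V₁ s - V₂ s ≤ M)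
    (s : S) : V₁ s - V₂ s ≤ R + γ * M := by
  set c : ℝ := R + γ * M with hc
  set f₁ : A → ℝ := fun a => r₁ (s, a) + γ * ∫ s', V₁ s' ∂(P (s, a)) with hf₁
  set f₂ : A → ℝ := fun a => r₂ (s, a) + γ * ∫ s', V₂ s' ∂(P (s, a)) with hf₂
  -- measurability of the inner integrals
  have hPV : ∀ (V : S → ℝ), Measurable V →
      Measurable fun a : A => ∫ s', V s' ∂(P (s, a)) := by
    intro V hV
    have : StronglyMeasurable fun a : A =>
        ∫ s', (fun p : A × S => V p.2) (a, s') ∂((P.comap (Prod.mk s)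
          measurable_prodMk_left) a) :=
      (hV.comp measurable_snd).stronglyMeasurable.integral_kernel_prod_right'
    simpa [Kernel.comap_apply] using this.measurable
  have hf₁m : Measurable f₁ :=
    ((hr₁m.comp measurable_prodMk_left)).add ((hPV V₁ hV₁m).const_mul γ)
  have hf₂m : Measurable f₂ :=
    ((hr₂m.comp measurable_prodMk_left)).add ((hPV V₂ hV₂m).const_mul γ)
  -- bounds on the inner integrals
  have hC₁0 : (0:ℝ) ≤ C₁ := le_trans (abs_nonneg _) (hV₁b s)
  have hC₂0 : (0:ℝ) ≤ C₂ := le_trans (abs_nonneg _) (hV₂b s)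
  have hIb : ∀ (V : S → ℝ) (C : ℝ), Measurable V → (∀ t, |V t| ≤ C) →
      ∀ a : A, |∫ s', V s' ∂(P (s, a))| ≤ C := by
    intro V C hVm hVb a
    calc |∫ s', V s' ∂(P (s, a))| ≤ ∫ s', |V s'| ∂(P (s, a)) := by simpa [Real.norm_eq_abs] using norm_integral_le_integral_norm (fun s' => V s')
    _ ≤ ∫ _, C ∂(P (s, a)) := by
        refine integral_mono_of_nonneg (ae_of_all _ fun t => abs_nonneg _)
          (integrable_const _) (ae_of_all _ fun t => hVb t)
    _ = C := by simp
  -- bounds on f₁, f₂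
  have hf₁b : ∀ a, |f₁ a| ≤ Cr₁ + γ * C₁ := by
    intro a
    have h1 := hr₁b (s, a)
    have h2 := hIb V₁ C₁ hV₁m hV₁b a
    calc |f₁ a| ≤ |r₁ (s, a)| + |γ * ∫ s', V₁ s' ∂(P (s, a))| := abs_add_le _ _
    _ ≤ Cr₁ + γ * C₁ := by
        rw [abs_mul, abs_of_nonneg hγ0]
        exact add_le_add h1 (mul_le_mul_of_nonneg_left h2 hγ0)
  have hf₂b : ∀ a, |f₂ a| ≤ Cr₂ + γ * C₂ := by
    intro a
    have h1 := hr₂b (s, a)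
    have h2 := hIb V₂ C₂ hV₂m hV₂b a
    calc |f₂ a| ≤ |r₂ (s, a)| + |γ * ∫ s', V₂ s' ∂(P (s, a))| := abs_add_le _ _
    _ ≤ Cr₂ + γ * C₂ := by
        rw [abs_mul, abs_of_nonneg hγ0]
        exact add_le_add h1 (mul_le_mul_of_nonneg_left h2 hγ0)
  -- integrability of exp ∘ f₁, exp ∘ f₂
  have hint : ∀ (f : A → ℝ) (B : ℝ), Measurable f → (∀ a, |f a| ≤ B) →
      Integrable (fun a => Real.exp (f a)) ν := by
    intro f B hfm hfb
    refine Integrable.mono' (integrable_const (Real.exp B))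
      (hfm.exp).aestronglyMeasurable (ae_of_all _ fun a => ?_)
    rw [Real.norm_eq_abs, abs_of_nonneg (Real.exp_pos _).le]
    exact Real.exp_le_exp.2 (le_trans (le_abs_self _) (hfb a))
  have hint₁ : Integrable (fun a => Real.exp (f₁ a)) ν := hint f₁ _ hf₁m hf₁b
  have hint₂ : Integrable (fun a => Real.exp (f₂ a)) ν := hint f₂ _ hf₂m hf₂b
  -- pointwise comparison f₁ ≤ f₂ + c
  have hpt : ∀ a, f₁ a ≤ f₂ a + c := by
    intro a
    have h1 : r₁ (s, a) ≤ r₂ (s, a) + R := by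
      have := hR (s, a); linarith
    have h2 : (∫ s', V₁ s' ∂(P (s, a))) ≤ (∫ s', V₂ s' ∂(P (s, a))) + M := by
      have hle : (∫ s', V₁ s' ∂(P (s, a))) ≤ ∫ s', (V₂ s' + M) ∂(P (s, a)) := by
        refine integral_mono ?_ ?_ fun t => by have := hM t; dsimp; linarith
        · exact Integrable.mono' (integrable_const C₁) hV₁m.aestronglyMeasurable
            (ae_of_all _ fun t => by rw [Real.norm_eq_abs]; exact hV₁b t)
        · exact Integrable.add (Integrable.mono' (integrable_const C₂)
            hV₂m.aestronglyMeasurable (ae_of_all _ fun t => by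
              rw [Real.norm_eq_abs]; exact hV₂b t)) (integrable_const _)
      have heq : (∫ s', (V₂ s' + M) ∂(P (s, a))) = (∫ s', V₂ s' ∂(P (s, a))) + M := by
        rw [integral_add (Integrable.mono' (integrable_const C₂)
            hV₂m.aestronglyMeasurable (ae_of_all _ fun t => by
              rw [Real.norm_eq_abs]; exact hV₂b t)) (integrable_const _)]
        simp
      rw [heq] at hle; exact hle
    have : γ * (∫ s', V₁ s' ∂(P (s, a))) ≤ γ * (∫ s', V₂ s' ∂(P (s, a))) + γ * M := by
      nlinarith [mul_le_mul_of_nonneg_left h2 hγ0]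
    simp only [hf₁, hf₂, hc]; linarith
  -- integral comparison
  have hIcomp : (∫ a, Real.exp (f₁ a) ∂ν) ≤ Real.exp c * ∫ a, Real.exp (f₂ a) ∂ν := by
    have : (∫ a, Real.exp (f₁ a) ∂ν) ≤ ∫ a, Real.exp c * Real.exp (f₂ a) ∂ν := by
      refine integral_mono hint₁ (hint₂.const_mul _) fun a => ?_
      rw [← Real.exp_add]
      exact Real.exp_le_exp.2 (by have := hpt a; linarith)
    rwa [integral_const_mul] at this
  -- positivity of ∫ exp f₂ and ∫ exp f₁
  have hνpos : 0 < (ν Set.univ).toReal := by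
    refine ENNReal.toReal_pos ?_ (measure_ne_top _ _)
    simpa [Measure.measure_univ_eq_zero] using hν
  have hIpos : ∀ (f : A → ℝ) (B : ℝ), (∀ a, |f a| ≤ B) →
      Integrable (fun a => Real.exp (f a)) ν → 0 < ∫ a, Real.exp (f a) ∂ν := by
    intro f B hfb hfi
    have hlb : (∫ _, Real.exp (-B) ∂ν) ≤ ∫ a, Real.exp (f a) ∂ν := by
      refine integral_mono (integrable_const _) hfi fun a => ?_
      exact Real.exp_le_exp.2 (by have := hfb a; have := neg_abs_le (f a); linarith)
    have : (∫ _, Real.exp (-B) ∂ν) = (ν Set.univ).toReal * Real.exp (-B) := by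
      simp [smul_eq_mul, Measure.real]
    rw [this] at hlb
    exact lt_of_lt_of_le (mul_pos hνpos (Real.exp_pos _)) hlb
  have hI₁pos := hIpos f₁ _ hf₁b hint₁
  have hI₂pos := hIpos f₂ _ hf₂b hint₂
  -- conclude via log
  have hlog : Real.log (∫ a, Real.exp (f₁ a) ∂ν) ≤
      c + Real.log (∫ a, Real.exp (f₂ a) ∂ν) := by
    calc Real.log (∫ a, Real.exp (f₁ a) ∂ν)
        ≤ Real.log (Real.exp c * ∫ a, Real.exp (f₂ a) ∂ν) :=
          Real.log_le_log hI₁pos hIcomp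
    _ = c + Real.log (∫ a, Real.exp (f₂ a) ∂ν) := by
          rw [Real.log_mul (Real.exp_ne_zero _) (ne_of_gt hI₂pos), Real.log_exp]
  have h₁ := hfix₁ s
  have h₂ := hfix₂ s
  simp only [hf₁, hf₂] at hlog
  rw [h₁, h₂] at hlog
  linarith

/-- Claim A.5: Lipschitz continuity of the optimal soft value function in the reward.
If `V₁, V₂` are bounded measurable fixed points of the soft Bellman V-operators with
rewards `r₁, r₂` respectively, then
`sup_s |V₁(s) − V₂(s)| ≤ (1/(1−γ)) · sup_{(s,a)} |r₁(s,a) − r₂(s,a)|`. -/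
theorem soft_value_lipschitz_in_reward
    {S A : Type*} [MeasurableSpace S] [MeasurableSpace A]
    (ν : Measure A) [IsFiniteMeasure ν] (hν : ν ≠ 0)
    (P : Kernel (S × A) S) [IsMarkovKernel P]
    (γ : ℝ) (hγ0 : 0 ≤ γ) (hγ1 : γ < 1)
    (r₁ r₂ : S × A → ℝ) (hr₁m : Measurable r₁) (hr₂m : Measurable r₂)
    (Cr₁ Cr₂ : ℝ) (hr₁b : ∀ p, |r₁ p| ≤ Cr₁) (hr₂b : ∀ p, |r₂ p| ≤ Cr₂)
    (V₁ V₂ : S → ℝ) (hV₁m : Measurable V₁) (hV₂m : Measurable V₂)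
    (C₁ C₂ : ℝ) (hV₁b : ∀ s, |V₁ s| ≤ C₁) (hV₂b : ∀ s, |V₂ s| ≤ C₂)
    (hfix₁ : ∀ s : S,
      Real.log (∫ a, Real.exp (r₁ (s, a) + γ * ∫ s', V₁ s' ∂(P (s, a))) ∂ν) = V₁ s)
    (hfix₂ : ∀ s : S,
      Real.log (∫ a, Real.exp (r₂ (s, a) + γ * ∫ s', V₂ s' ∂(P (s, a))) ∂ν) = V₂ s) :
    (⨆ s : S, |V₁ s - V₂ s|) ≤ (1 / (1 - γ)) * ⨆ p : S × A, |r₁ p - r₂ p| := by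
  by_cases hS : Nonempty S
  · -- A is nonempty since ν ≠ 0
    have hA : Nonempty A := by
      by_contra h
      rw [not_nonempty_iff] at h
      exact hν (ν.eq_zero_of_isEmpty)
    have hSA : Nonempty (S × A) := hS.elim fun s => hA.elim fun a => ⟨(s, a)⟩
    set R : ℝ := ⨆ p : S × A, |r₁ p - r₂ p| with hRdef
    set M : ℝ := ⨆ s : S, |V₁ s - V₂ s| with hMdef
    have hRbdd : BddAbove (Set.range fun p : S × A => |r₁ p - r₂ p|) := by
      refine ⟨Cr₁ + Cr₂, ?_⟩
      rintro x ⟨p, rfl⟩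
      calc |r₁ p - r₂ p| ≤ |r₁ p| + |r₂ p| := abs_sub _ _
      _ ≤ Cr₁ + Cr₂ := add_le_add (hr₁b p) (hr₂b p)
    have hMbdd : BddAbove (Set.range fun s : S => |V₁ s - V₂ s|) := by
      refine ⟨C₁ + C₂, ?_⟩
      rintro x ⟨s, rfl⟩
      calc |V₁ s - V₂ s| ≤ |V₁ s| + |V₂ s| := abs_sub _ _
      _ ≤ C₁ + C₂ := add_le_add (hV₁b s) (hV₂b s)
    have hR : ∀ p, r₁ p - r₂ p ≤ R := fun p =>
      le_trans (le_abs_self _) (le_ciSup hRbdd p)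
    have hR' : ∀ p, r₂ p - r₁ p ≤ R := fun p =>
      le_trans (by rw [abs_sub_comm]; exact le_abs_self _) (le_ciSup hRbdd p)
    have hM : ∀ s, V₁ s - V₂ s ≤ M := fun s =>
      le_trans (le_abs_self _) (le_ciSup hMbdd s)
    have hM' : ∀ s, V₂ s - V₁ s ≤ M := fun s =>
      le_trans (by rw [abs_sub_comm]; exact le_abs_self _) (le_ciSup hMbdd s)
    have key₁ : ∀ s, V₁ s - V₂ s ≤ R + γ * M :=
      soft_value_one_side ν hν P γ hγ0 r₁ r₂ hr₁m hr₂m Cr₁ Cr₂ hr₁b hr₂b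
        V₁ V₂ hV₁m hV₂m C₁ C₂ hV₁b hV₂b hfix₁ hfix₂ R M hR hM
    have key₂ : ∀ s, V₂ s - V₁ s ≤ R + γ * M :=
      soft_value_one_side ν hν P γ hγ0 r₂ r₁ hr₂m hr₁m Cr₂ Cr₁ hr₂b hr₁b
        V₂ V₁ hV₂m hV₁m C₂ C₁ hV₂b hV₁b hfix₂ hfix₁ R M hR' hM'
    have hMle : M ≤ R + γ * M := by
      refine ciSup_le fun s => ?_
      exact abs_sub_le_iff.2 ⟨key₁ s, key₂ s⟩
    have h1γ : (0:ℝ) < 1 - γ := by linarith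
    rw [div_mul_eq_mul_div, one_mul, le_div_iff₀ h1γ]
    nlinarith
  · rw [not_nonempty_iff] at hS
    haveI := hS
    haveI : IsEmpty (S × A) := inferInstance
    rw [Real.iSup_of_isEmpty, Real.iSup_of_isEmpty]
    simp
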